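/- Let k be a field of characteristic p > 0 and let P \in k[t] be a nonzero polynomial of degree m. Then there exists a polynomial Q \in k[t] that is a multiple of P in k[t] and has the form Q(t) = \sum_{i=0}^m r_i t^{p^i} with r_i \in k and r_m \neq 0. -/

import Mathlib

open Polynomial

/-- Over a field of characteristic `p > 0`, every nonzero polynomial `P` of degree `m`
divides an additive polynomial `Q(t) = ∑_{i=0}^m r_i t^(p^i)` with `r_m ≠ 0`. -/
theorem exists_additive_multiple
    (k : Type*) [Field k] (p : ℕ) [Fact p.Prime] [CharP k p]
    (P : k[X]) (hP : P ≠ 0) (m : ℕ) (hm : P.natDegree = m) :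
    ∃ r : Fin (m + 1) → k, r (Fin.last m) ≠ 0 ∧
      P ∣ ∑ i : Fin (m + 1), C (r i) * X ^ (p ^ (i : ℕ)) := by
  classical
  subst hm
  set m := P.natDegree with hmdef
  -- the quotient k[X]/(P) has dimension m over k
  have hfin : Module.Finite k (AdjoinRoot P) := (AdjoinRoot.powerBasis hP).finite
  have hrank : Module.finrank k (AdjoinRoot P) = m := by
    rw [(AdjoinRoot.powerBasis hP).finrank, AdjoinRoot.powerBasis_dim]
  -- m+1 vectors are linearly dependent
  have hdep : ¬ LinearIndependent k
      (fun i : Fin (m + 1) => AdjoinRoot.mk P (X ^ p ^ (i : ℕ))) := by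
    intro h
    have := h.fintype_card_le_finrank
    rw [hrank, Fintype.card_fin] at this
    omega
  obtain ⟨g, hg0, i0, hi0⟩ := Fintype.not_linearIndependent_iff.mp hdep
  have hdvd : P ∣ ∑ i : Fin (m + 1), C (g i) * X ^ p ^ (i : ℕ) := by
    rw [← AdjoinRoot.mk_eq_zero, map_sum, ← hg0]
    refine Finset.sum_congr rfl fun i _ => ?_
    rw [AdjoinRoot.smul_mk, smul_eq_C_mul]
  -- the largest index with nonzero coefficient
  set S : Finset (Fin (m + 1)) := Finset.univ.filter (fun i => g i ≠ 0) with hS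
  have hSne : S.Nonempty := ⟨i0, by simp [hS, hi0]⟩
  set s : Fin (m + 1) := S.max' hSne with hsdef
  have hgs : g s ≠ 0 := by
    have := S.max'_mem hSne
    simp only [hS, Finset.mem_filter] at this
    exact this.2
  have hle : ∀ i : Fin (m + 1), g i ≠ 0 → i ≤ s := fun i hi =>
    S.le_max' i (by simp [hS, hi])
  set e : ℕ := m - (s : ℕ) with hedef
  have hsm : (s : ℕ) ≤ m := Nat.lt_succ_iff.mp s.isLt
  -- ℕ-indexed coefficient function
  set G : ℕ → k := fun n => if h : n < m + 1 then g ⟨n, h⟩ else 0 with hGdef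
  have hGg : ∀ i : Fin (m + 1), G (i : ℕ) = g i := by
    intro i
    simp only [hGdef, dif_pos i.isLt]
  have hGzero : ∀ n, (s : ℕ) < n → G n = 0 := by
    intro n hn
    by_cases h : n < m + 1
    · simp only [hGdef, dif_pos h]
      by_contra hne
      have h2 : n ≤ (s : ℕ) := by simpa [Fin.le_def] using hle ⟨n, h⟩ hne
      omega
    · simp only [hGdef, dif_neg h]
  refine ⟨fun j => if e ≤ (j : ℕ) then G ((j : ℕ) - e) ^ p ^ e else 0, ?_, ?_⟩
  · have hlast : (Fin.last m : ℕ) = m := rfl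
    simp only [hlast, if_pos (Nat.sub_le m _)]
    have hms : m - e = (s : ℕ) := by omega
    rw [hms, hGg s]
    rw [if_pos (show e ≤ m by omega)]
    exact pow_ne_zero _ hgs
  · -- the new sum equals (old sum)^(p^e)
    have hpne : p ^ e ≠ 0 := pow_ne_zero _ (Fact.out (p := p.Prime)).pos.ne'
    refine dvd_trans (dvd_trans hdvd (dvd_pow_self _ hpne)) (dvd_of_eq ?_)
    rw [sum_pow_char_pow]
    have hterm : ∀ i : Fin (m + 1),
        (C (g i) * X ^ p ^ (i : ℕ)) ^ p ^ e
          = C (G (i : ℕ) ^ p ^ e) * X ^ p ^ ((i : ℕ) + e) := by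
      intro i
      rw [mul_pow, ← C_pow, ← pow_mul, ← pow_add, hGg]
    rw [Finset.sum_congr rfl fun i _ => hterm i]
    rw [Fin.sum_univ_eq_sum_range (fun i => C (G i ^ p ^ e) * X ^ p ^ (i + e)) (m + 1)]
    rw [Fin.sum_univ_eq_sum_range
      (fun j => C (if e ≤ j then G (j - e) ^ p ^ e else 0) * X ^ p ^ j) (m + 1)]
    -- restrict RHS to indices ≤ s
    have hRHS : ∑ i ∈ Finset.range (m + 1), C (G i ^ p ^ e) * X ^ p ^ (i + e)
        = ∑ i ∈ Finset.range ((s : ℕ) + 1), C (G i ^ p ^ e) * X ^ p ^ (i + e) := by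
      refine (Finset.sum_subset (Finset.range_subset_range.mpr (by omega)) ?_).symm
      intro x _ hx
      rw [Finset.mem_range, not_lt] at hx
      rw [hGzero x (by omega), zero_pow hpne, C_0, zero_mul]
    rw [hRHS]
    -- restrict LHS to indices ≥ e and reindex
    have hLHS : ∑ j ∈ Finset.range (m + 1),
        C (if e ≤ j then G (j - e) ^ p ^ e else 0) * X ^ p ^ j
        = ∑ j ∈ Finset.Ico e (m + 1),
        C (if e ≤ j then G (j - e) ^ p ^ e else 0) * X ^ p ^ j := by
      rw [Finset.range_eq_Ico]
      refine (Finset.sum_subset (Finset.Ico_subset_Ico (by omega) le_rfl) ?_).symm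
      intro x hx hx'
      rw [Finset.mem_Ico] at hx hx'
      rw [if_neg (by omega), C_0, zero_mul]
    rw [hLHS, Finset.sum_Ico_eq_sum_range]
    have hrange : m + 1 - e = (s : ℕ) + 1 := by omega
    rw [hrange]
    refine Finset.sum_congr rfl fun i _ => ?_
    rw [if_pos (Nat.le_add_right e i)]
    have h1 : e + i - e = i := by omega
    rw [h1, Nat.add_comm e i]
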